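/- For c, μ > 0, the function F(s) = (π/4)(μ/c)·s/cosh((π/2)√(μs/c − 1)) satisfies F(0) = 1 (as a limit), F is holomorphic on {Re s > −3c/μ}, and F(s) → 0 as s → +∞ along the reals. -/

import Mathlib

open Filter Topology

private lemma sq_cpow_half (z : ℂ) : z ^ (1/2 : ℂ) * z ^ (1/2 : ℂ) = z := by
  rcases eq_or_ne z 0 with rfl | hz
  · rw [Complex.zero_cpow (by norm_num : (1/2 : ℂ) ≠ 0)]; ring
  · rw [← Complex.cpow_add _ _ hz]; norm_num

private lemma cosh_half_eq_cos (t w : ℂ) :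
    Complex.cosh (t * w ^ (1/2 : ℂ)) = Complex.cos (t * (-w) ^ (1/2 : ℂ)) := by
  set a := w ^ (1/2 : ℂ) with ha'
  set b := (-w) ^ (1/2 : ℂ) with hb'
  have ha : a * a = w := sq_cpow_half w
  have hb : b * b = -w := sq_cpow_half (-w)
  have h2 : (Complex.I * a) * (Complex.I * a) = -w := by
    calc (Complex.I * a) * (Complex.I * a) = (Complex.I * Complex.I) * (a * a) := by ring
    _ = -w := by rw [Complex.I_mul_I, ha]; ring
  rcases mul_self_eq_mul_self_iff.mp (hb.trans h2.symm) with h | h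
  · rw [h, show t * (Complex.I * a) = (t * a) * Complex.I by ring, Complex.cos_mul_I]
  · rw [h, show t * (-(Complex.I * a)) = -((t * a) * Complex.I) by ring, Complex.cos_neg,
      Complex.cos_mul_I]

private noncomputable def Dd (q : ℝ) : ℂ → ℂ := fun s =>
  Complex.cosh (Complex.ofReal (Real.pi / 2) * ((Complex.ofReal q * s - 1) ^ (1/2 : ℂ)))

private noncomputable def DdCos (q : ℝ) : ℂ → ℂ := fun s =>
  Complex.cos (Complex.ofReal (Real.pi / 2) * ((1 - Complex.ofReal q * s) ^ (1/2 : ℂ)))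

private lemma Dd_eq_cos (q : ℝ) : Dd q = DdCos q := by
  funext s
  have h : (1 : ℂ) - Complex.ofReal q * s = -(Complex.ofReal q * s - 1) := by ring
  rw [Dd, DdCos, h, cosh_half_eq_cos]

private lemma Dd_diffAt_of_ne (q : ℝ) {s₀ : ℂ} (h : Complex.ofReal q * s₀ - 1 ≠ 0) :
    DifferentiableAt ℂ (Dd q) s₀ := by
  have hf : ∀ s₁ : ℂ, DifferentiableAt ℂ (fun s : ℂ => Complex.ofReal q * s - 1) s₁ :=
    fun s₁ => (differentiableAt_id.const_mul _).sub_const 1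
  have hf' : ∀ s₁ : ℂ, DifferentiableAt ℂ (fun s : ℂ => 1 - Complex.ofReal q * s) s₁ :=
    fun s₁ => (differentiableAt_const 1).sub (differentiableAt_id.const_mul _)
  have hslit : (Complex.ofReal q * s₀ - 1) ∈ Complex.slitPlane ∨
      (1 - Complex.ofReal q * s₀) ∈ Complex.slitPlane := by
    rw [Complex.mem_slitPlane_iff, Complex.mem_slitPlane_iff]
    by_contra hcon
    push_neg at hcon
    obtain ⟨⟨h1, h2⟩, h3, h4⟩ := hcon
    apply h
    have him : (Complex.ofReal q * s₀ - 1).im = 0 := h2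
    have hre : (Complex.ofReal q * s₀ - 1).re = 0 := by
      have : (1 - Complex.ofReal q * s₀).re = -((Complex.ofReal q * s₀ - 1).re) := by
        simp
      rw [this] at h3
      linarith
    exact Complex.ext hre him
  rcases hslit with hs | hs
  · exact Complex.differentiable_cosh.differentiableAt.comp s₀
      ((((hf s₀).hasDerivAt.cpow_const hs).differentiableAt).const_mul _)
  · rw [Dd_eq_cos]
    exact Complex.differentiable_cos.differentiableAt.comp s₀
      ((((hf' s₀).hasDerivAt.cpow_const hs).differentiableAt).const_mul _)

private lemma Dd_diff (q : ℝ) (hq : q ≠ 0) : Differentiable ℂ (Dd q) := by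
  intro s₀
  by_cases h : Complex.ofReal q * s₀ - 1 = 0
  · refine (Complex.analyticAt_of_differentiable_on_punctured_nhds_of_continuousAt ?_
      ?_).differentiableAt
    · filter_upwards [self_mem_nhdsWithin] with s hs
      refine Dd_diffAt_of_ne q fun h0 => hs ?_
      have hq' : (Complex.ofReal q : ℂ) ≠ 0 := Complex.ofReal_ne_zero.mpr hq
      have : Complex.ofReal q * s = Complex.ofReal q * s₀ := by
        rw [sub_eq_zero] at h h0; rw [h, h0]
      exact mul_left_cancel₀ hq' this
    · have hhalf : ContinuousAt (fun z : ℂ => z ^ (1/2 : ℂ)) 0 := by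
        have h2 := Complex.continuousAt_cpow_zero_of_re_pos
          (z := (1/2 : ℂ)) (by norm_num)
        have hpair : ContinuousAt (fun z : ℂ => (z, (1/2 : ℂ))) 0 :=
          continuousAt_id.prodMk continuousAt_const
        exact ContinuousAt.comp (f := fun z : ℂ => (z, (1/2 : ℂ))) h2 hpair
      have hinner : ContinuousAt (fun s : ℂ => Complex.ofReal q * s - 1) s₀ :=
        ((continuous_const.mul continuous_id).sub continuous_const).continuousAt
      have houter : ContinuousAt (fun z : ℂ => z ^ (1/2 : ℂ)) (Complex.ofReal q * s₀ - 1) := by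
        rw [h]; exact hhalf
      have hcomp : ContinuousAt (fun s : ℂ => (Complex.ofReal q * s - 1) ^ (1/2 : ℂ)) s₀ :=
        ContinuousAt.comp (f := fun s : ℂ => Complex.ofReal q * s - 1) houter hinner
      exact Complex.continuous_cosh.continuousAt.comp
        (ContinuousAt.mul continuousAt_const hcomp)
  · exact Dd_diffAt_of_ne q h

private lemma neg_one_cpow_half : (-1 : ℂ) ^ (1/2 : ℂ) = Complex.I := by
  rw [Complex.cpow_def_of_ne_zero (by norm_num), Complex.log_neg_one,
    show (Real.pi : ℂ) * Complex.I * (1/2) = (Complex.ofReal (Real.pi / 2)) * Complex.I by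
      push_cast; ring,
    Complex.exp_mul_I, ← Complex.ofReal_cos, ← Complex.ofReal_sin,
    Real.cos_pi_div_two, Real.sin_pi_div_two]
  simp

private lemma Dd_zero (q : ℝ) : Dd q 0 = 0 := by
  rw [Dd]
  simp only [mul_zero, zero_sub]
  rw [neg_one_cpow_half, Complex.cosh_mul_I,
    ← Complex.ofReal_cos, Real.cos_pi_div_two]
  simp

private lemma Dd_deriv0 (q : ℝ) :
    HasDerivAt (Dd q) (Complex.ofReal (Real.pi / 4 * q)) 0 := by
  rw [Dd_eq_cos]
  have h1 : HasDerivAt (fun s : ℂ => 1 - Complex.ofReal q * s) (-(Complex.ofReal q)) 0 := by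
    simpa using ((hasDerivAt_id (0 : ℂ)).const_mul (Complex.ofReal q)).const_sub 1
  have hslit : ((1 : ℂ) - Complex.ofReal q * 0) ∈ Complex.slitPlane := by
    simp [Complex.mem_slitPlane_iff]
  have h2 := (h1.cpow_const (c := (1/2 : ℂ)) hslit).const_mul (Complex.ofReal (Real.pi / 2))
  have h3 := h2.ccos
  convert h3 using 1
  case e'_8 => rfl
  have hv : ((1 : ℂ) - Complex.ofReal q * 0) = 1 := by ring
  rw [hv, Complex.one_cpow, mul_one, ← Complex.ofReal_sin, Real.sin_pi_div_two]
  rw [Complex.one_cpow]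
  push_cast
  ring

private lemma Dd_ne_zero {c μ : ℝ} (hc : 0 < c) (hμ : 0 < μ) {s : ℂ}
    (hre : s.re > -3 * c / μ) (hs : s ≠ 0) : Dd (μ / c) s ≠ 0 := by
  intro h0
  rw [Dd] at h0
  set a := (Complex.ofReal (μ / c) * s - 1) ^ (1/2 : ℂ) with ha'
  have h0' : Complex.cos ((Complex.ofReal (Real.pi / 2) * a) * Complex.I) = 0 := by
    rw [Complex.cos_mul_I]; exact h0
  obtain ⟨k, hk⟩ := Complex.cos_eq_zero_iff.mp h0'
  have hπ : (Real.pi : ℂ) ≠ 0 := Complex.ofReal_ne_zero.mpr Real.pi_ne_zero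
  have haI : a * Complex.I = 2 * (k : ℂ) + 1 := by
    have hπ2 : (Real.pi : ℂ) / 2 ≠ 0 := by
      simpa using hπ
    apply mul_left_cancel₀ hπ2
    push_cast at hk ⊢
    linear_combination hk
  have ha : a = -((2 * (k : ℂ) + 1) * Complex.I) := by
    linear_combination (-Complex.I) * haI + a * Complex.I_mul_I
  have hsq : Complex.ofReal (μ / c) * s - 1 = -((2 * (k : ℂ) + 1) ^ 2) := by
    have := sq_cpow_half (Complex.ofReal (μ / c) * s - 1)
    rw [← ha'] at this
    rw [← this, ha]
    linear_combination ((2 * (k : ℂ) + 1) ^ 2) * Complex.I_mul_I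
  -- so s is real:
  have hq : (0 : ℝ) < μ / c := div_pos hμ hc
  have hq0 : (Complex.ofReal (μ / c)) ≠ 0 := Complex.ofReal_ne_zero.mpr (ne_of_gt hq)
  set r : ℝ := (1 - ((2 * (k : ℝ) + 1)) ^ 2) * (c / μ) with hr'
  have hprod : (μ / c) * (c / μ) = 1 := by field_simp
  have hkey : Complex.ofReal (μ / c) * Complex.ofReal r = 1 - (2 * (k : ℂ) + 1) ^ 2 := by
    rw [← Complex.ofReal_mul, hr',
      show (μ / c) * ((1 - (2 * (k : ℝ) + 1) ^ 2) * (c / μ))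
        = (1 - (2 * (k : ℝ) + 1) ^ 2) * ((μ / c) * (c / μ)) from by ring, hprod, mul_one]
    push_cast
    ring
  have hsr : s = Complex.ofReal r := by
    apply mul_left_cancel₀ hq0
    rw [hkey]
    linear_combination hsq
  have hrre : s.re = r := by rw [hsr, Complex.ofReal_re]
  rw [hrre] at hre
  -- from hre deduce (2k+1)^2 < 4 over ℝ
  have hcμpos : 0 < c / μ := div_pos hc hμ
  have hineq : ((2 * (k : ℝ) + 1)) ^ 2 < 4 := by
    by_contra hcon
    push_neg at hcon
    have : r ≤ -3 * c / μ := by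
      rw [hr']
      have h4 : 1 - ((2 * (k : ℝ) + 1)) ^ 2 ≤ -3 := by linarith
      calc (1 - ((2 * (k : ℝ) + 1)) ^ 2) * (c / μ) ≤ (-3) * (c / μ) := by
            apply mul_le_mul_of_nonneg_right h4 (le_of_lt hcμpos)
        _ = -3 * c / μ := by ring
    linarith
  have hkZ : (2 * k + 1) ^ 2 < 4 := by exact_mod_cast hineq
  have hk1 : 2 * k + 1 = 1 ∨ 2 * k + 1 = -1 := by
    have hlt : 2 * k + 1 < 2 := by nlinarith
    have hgt : -2 < 2 * k + 1 := by nlinarith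
    omega
  have hcastk : (2 * (k : ℝ) + 1) = 1 ∨ (2 * (k : ℝ) + 1) = -1 := by
    rcases hk1 with h | h
    · left; exact_mod_cast congrArg (Int.cast : ℤ → ℝ) h
    · right; exact_mod_cast congrArg (Int.cast : ℤ → ℝ) h
  have hsq1 : ((2 * (k : ℝ) + 1)) ^ 2 = 1 := by
    rcases hcastk with h | h <;> rw [h] <;> norm_num
  have hr0 : r = 0 := by rw [hr', hsq1]; ring
  exact hs (by rw [hsr, hr0, Complex.ofReal_zero])

private lemma cosh_lower (y : ℝ) (hy : 0 ≤ y) : y ^ 4 / 512 ≤ Real.cosh y := by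
  have h1 : y / 4 ≤ Real.exp (y / 4) := le_trans (by linarith) (Real.add_one_le_exp (y / 4))
  have h2 : (y / 4) ^ 4 ≤ Real.exp (y / 4) ^ 4 := pow_le_pow_left₀ (by positivity) h1 4
  have h3 : Real.exp (y / 4) ^ 4 = Real.exp y := by
    rw [← Real.exp_nat_mul]; congr 1; push_cast; ring
  have h4 : Real.exp y / 2 ≤ Real.cosh y := by
    rw [Real.cosh_eq]
    have := (Real.exp_pos (-y)).le
    linarith
  have h6 : y ^ 4 / 256 ≤ Real.exp y := by
    calc y ^ 4 / 256 = (y / 4) ^ 4 := by ring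
      _ ≤ Real.exp (y / 4) ^ 4 := h2
      _ = Real.exp y := h3
  linarith

/-- the function `F(s) = (π/4)(μ/c)·s/cosh((π/2)√(μs/c − 1))`
satisfies `F(0) = 1` (as a limit), extends holomorphically to `{Re s > −3c/μ}`,
and `F(s) → 0` as `s → +∞` along the reals. -/
theorem stmt_10 (c μ : ℝ) (hc : 0 < c) (hμ : 0 < μ) :
    let F : ℂ → ℂ := fun s =>
      Complex.ofReal ((Real.pi / 4) * (μ / c)) * s /
        Complex.cosh (Complex.ofReal (Real.pi / 2) *
          ((Complex.ofReal (μ / c) * s - 1) ^ (1/2 : ℂ)))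
    Tendsto F (nhdsWithin 0 {(0 : ℂ)}ᶜ) (nhds 1) ∧
    (∃ G : ℂ → ℂ, DifferentiableOn ℂ G {s : ℂ | s.re > -3 * c / μ} ∧
      G 0 = 1 ∧ ∀ s : ℂ, s.re > -3 * c / μ → s ≠ 0 → G s = F s) ∧
    Tendsto (fun s : ℝ => F (Complex.ofReal s)) atTop (nhds 0) := by
  intro F
  have hq : (0:ℝ) < μ / c := div_pos hμ hc
  set C : ℂ := Complex.ofReal (Real.pi / 4 * (μ / c)) with hC'
  have hF : ∀ s : ℂ, F s = C * s / Dd (μ / c) s := fun s => rfl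
  have hC : C ≠ 0 := Complex.ofReal_ne_zero.mpr (by positivity)
  have hD := Dd_diff (μ / c) (ne_of_gt hq)
  set g : ℂ → ℂ := dslope (Dd (μ / c)) 0 with hg'
  have hg0 : g 0 = C := by rw [hg', dslope_same]; exact (Dd_deriv0 (μ / c)).deriv
  have hgdiff : Differentiable ℂ g := by
    rw [hg', ← differentiableOn_univ]
    exact (Complex.differentiableOn_dslope univ_mem).mpr hD.differentiableOn
  have hgs : ∀ s : ℂ, s ≠ 0 → g s = Dd (μ / c) s / s := by
    intro s hs
    rw [hg', dslope_of_ne _ hs, slope_def_field, Dd_zero, sub_zero, sub_zero]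
  set G : ℂ → ℂ := fun s => C / g s with hG'
  have hFG : ∀ s : ℂ, s ≠ 0 → G s = F s := by
    intro s hs
    show C / g s = F s
    rw [hgs s hs, div_div_eq_mul_div, hF]
  have hG0 : G 0 = 1 := by show C / g 0 = 1; rw [hg0, div_self hC]
  refine ⟨?_, ⟨G, ?_, hG0, fun s _ hs => hFG s hs⟩, ?_⟩
  · -- limit 1 at 0
    have hGat : ContinuousAt G 0 := by
      apply ContinuousAt.div continuousAt_const (hgdiff 0).continuousAt
      rw [hg0]; exact hC
    have h1 : Tendsto G (nhdsWithin 0 {(0:ℂ)}ᶜ) (nhds 1) := by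
      rw [← hG0]
      exact hGat.continuousWithinAt
    refine Tendsto.congr' ?_ h1
    exact Filter.eventually_of_mem self_mem_nhdsWithin fun s hs => hFG s hs
  · -- differentiability of G
    intro s hs
    apply DifferentiableAt.differentiableWithinAt
    apply DifferentiableAt.div (differentiableAt_const C) (hgdiff s)
    rcases eq_or_ne s 0 with rfl | hs0
    · rw [hg0]; exact hC
    · rw [hgs s hs0]
      exact div_ne_zero (Dd_ne_zero hc hμ hs hs0) hs0
  · -- limit 0 at +∞
    have hprod : μ / c * (c / μ) = 1 := by field_simp
    have h3 : ∀ᶠ s : ℝ in atTop, F (Complex.ofReal s) = Complex.ofReal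
        (Real.pi / 4 * (μ / c) * s /
          Real.cosh (Real.pi / 2 * (μ / c * s - 1) ^ ((1:ℝ)/2))) := by
      filter_upwards [eventually_gt_atTop (c/μ)] with s hs
      have hx : (0:ℝ) ≤ μ / c * s - 1 := by
        have h5 : μ / c * (c / μ) < μ / c * s := mul_lt_mul_of_pos_left hs hq
        rw [hprod] at h5
        linarith
      rw [hF]
      have hcast : (Complex.ofReal (μ / c) * Complex.ofReal s - 1)
          = Complex.ofReal (μ / c * s - 1) := by push_cast; ring
      rw [Dd, hcast, hC']
      push_cast [Complex.ofReal_cpow hx]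
      norm_num
    have hmain : Tendsto (fun s : ℝ => Real.pi / 4 * (μ / c) * s /
        Real.cosh (Real.pi / 2 * (μ / c * s - 1) ^ ((1:ℝ)/2))) atTop (𝓝 0) := by
      have hK : Tendsto (fun s : ℝ =>
          (2048 * (Real.pi / 4 * (μ / c)) * c^2 / μ^2) / s) atTop (𝓝 0) :=
        Tendsto.div_atTop tendsto_const_nhds tendsto_id
      apply squeeze_zero' ?_ ?_ hK
      · filter_upwards [eventually_ge_atTop 0] with s hs
        exact div_nonneg (by positivity) (Real.cosh_pos _).le
      · filter_upwards [eventually_ge_atTop (2*c/μ), eventually_gt_atTop 0] with s h2 hs0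
        set t : ℝ := μ / c * s - 1 with ht'
        have hu : (2:ℝ) ≤ μ / c * s := by
          have h5 : μ / c * (2*c/μ) ≤ μ / c * s := mul_le_mul_of_nonneg_left h2 hq.le
          have h6 : μ / c * (2*c/μ) = 2 := by field_simp
          linarith
        have ht0 : 0 < t := by rw [ht']; linarith
        have htge : μ / (2*c) * s ≤ t := by
          rw [ht']
          have : μ / (2*c) * s = (μ / c * s) / 2 := by field_simp
          linarith
        have h4 : (t ^ ((1:ℝ)/2)) ^ 4 = t^2 := by
          rw [← Real.rpow_natCast (t ^ ((1:ℝ)/2)) 4, ← Real.rpow_mul ht0.le,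
            show ((1:ℝ)/2 * ((4:ℕ):ℝ)) = ((2:ℕ):ℝ) by norm_num, Real.rpow_natCast]
        have hπ1 : (1:ℝ) ≤ Real.pi / 2 := by
          have := Real.pi_gt_three; linarith
        have hco : t^2/512 ≤ Real.cosh (Real.pi/2 * t ^ ((1:ℝ)/2)) := by
          have hy : 0 ≤ Real.pi/2 * t ^ ((1:ℝ)/2) := by positivity
          refine le_trans ?_ (cosh_lower _ hy)
          rw [mul_pow, h4]
          have hp2 : (1:ℝ) ≤ (Real.pi/2)^2 := by nlinarith [hπ1]
          have hp4 : (1:ℝ) ≤ (Real.pi/2)^4 := by nlinarith [hp2]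
          have ht2 : (0:ℝ) ≤ t^2 := sq_nonneg t
          nlinarith
        rw [div_le_div_iff₀ (Real.cosh_pos _) hs0]
        have hts : (μ / (2*c) * s)^2 ≤ t^2 := by
          apply pow_le_pow_left₀ (by positivity) htge
        have hcoshge : (μ / (2*c) * s)^2 / 512 ≤
            Real.cosh (Real.pi/2 * t ^ ((1:ℝ)/2)) := le_trans (by linarith) hco
        have hKpos : (0:ℝ) ≤ 2048 * (Real.pi / 4 * (μ / c)) * c^2 / μ^2 := by positivity
        calc Real.pi / 4 * (μ / c) * s * s
            = (2048 * (Real.pi / 4 * (μ / c)) * c^2 / μ^2) * ((μ / (2*c) * s)^2 / 512) := by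
              field_simp; ring
          _ ≤ (2048 * (Real.pi / 4 * (μ / c)) * c^2 / μ^2) *
              Real.cosh (Real.pi/2 * t ^ ((1:ℝ)/2)) :=
              mul_le_mul_of_nonneg_left hcoshge hKpos
    have hcomp := (Complex.continuous_ofReal.tendsto 0).comp hmain
    rw [show Complex.ofReal 0 = (0:ℂ) from Complex.ofReal_zero] at hcomp
    exact Tendsto.congr' (h3.mono fun s hs => hs.symm) hcomp
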